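/- For every integer $n \geq 0$, the additive energy of $\{0, 1, \dots, n\} \subseteq \mathbb{Z}$ equals $\frac{2(n+1)^3 + (n+1)}{3}$. -/

import Mathlib

open Finset

lemma fiber_card (n s : ℕ) :
    ((range (n + 1) ×ˢ range (n + 1)).filter (fun p => p.1 + p.2 = s)).card
      = min s n + 1 - (s - n) := by
  have himg : (range (n + 1) ×ˢ range (n + 1)).filter (fun p => p.1 + p.2 = s)
      = (Finset.Icc (s - n) (min s n)).image (fun a => (a, s - a)) := by
    ext ⟨a, b⟩
    simp only [mem_filter, mem_product, mem_range, mem_image, mem_Icc, Prod.mk.injEq]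
    constructor
    · rintro ⟨⟨ha, hb⟩, hs⟩
      exact ⟨a, by omega, by omega, by omega⟩
    · rintro ⟨x, ⟨h1, h2⟩, rfl, rfl⟩
      omega
  rw [himg, Finset.card_image_of_injective _ (fun a b h => (Prod.mk.injEq _ _ _ _).mp h |>.1),
    Nat.card_Icc]

lemma sum_sq_formula (m : ℕ) :
    6 * ∑ s ∈ range m, (s + 1) ^ 2 = m * (m + 1) * (2 * m + 1) := by
  induction m with
  | zero => simp
  | succ k ih =>
    rw [Finset.sum_range_succ, Nat.mul_add, ih]
    ring

lemma energy_nat (n : ℕ) :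
    3 * (((range (n + 1) ×ˢ range (n + 1)) ×ˢ (range (n + 1) ×ˢ range (n + 1))).filter
        (fun p => p.1.1 + p.1.2 = p.2.1 + p.2.2)).card
      = 2 * (n + 1) ^ 3 + (n + 1) := by
  have hcard : (((range (n + 1) ×ˢ range (n + 1)) ×ˢ (range (n + 1) ×ˢ range (n + 1))).filter
        (fun p => p.1.1 + p.1.2 = p.2.1 + p.2.2)).card
      = ∑ s ∈ range (2 * n + 1), (min s n + 1 - (s - n)) ^ 2 := by
    rw [Finset.card_eq_sum_card_fiberwise
      (f := fun p : (ℕ × ℕ) × (ℕ × ℕ) => p.1.1 + p.1.2) (t := range (2 * n + 1))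
      (fun p hp => by
        simp only [Finset.mem_coe, mem_filter, mem_product, mem_range] at hp
        simp only [Finset.mem_coe, mem_range]; omega)]
    refine Finset.sum_congr rfl fun s _ => ?_
    rw [Finset.filter_filter]
    have : (((range (n + 1) ×ˢ range (n + 1)) ×ˢ (range (n + 1) ×ˢ range (n + 1))).filter
        (fun p => p.1.1 + p.1.2 = p.2.1 + p.2.2 ∧ p.1.1 + p.1.2 = s))
      = ((range (n + 1) ×ˢ range (n + 1)).filter (fun q => q.1 + q.2 = s)) ×ˢ
        ((range (n + 1) ×ˢ range (n + 1)).filter (fun q => q.1 + q.2 = s)) := by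
      ext ⟨⟨a, b⟩, ⟨c, d⟩⟩
      simp only [mem_filter, mem_product, mem_range]
      omega
    rw [this, Finset.card_product, fiber_card, sq]
  rw [hcard]
  have hsplit : ∑ s ∈ range (2 * n + 1), (min s n + 1 - (s - n)) ^ 2
      = ∑ s ∈ range (n + 1), (s + 1) ^ 2 + ∑ s ∈ range n, (s + 1) ^ 2 := by
    have h1 : range (2 * n + 1) = range (n + 1) ∪ Finset.Ico (n + 1) (2 * n + 1) := by
      rw [Finset.range_eq_Ico, Finset.range_eq_Ico]
      exact (Finset.Ico_union_Ico_eq_Ico (show 0 ≤ n + 1 by omega) (show n + 1 ≤ 2 * n + 1 by omega)).symm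
    rw [h1, Finset.sum_union (by
      simp only [Finset.disjoint_left, mem_range, Finset.mem_Ico]; omega)]
    congr 1
    · exact Finset.sum_congr rfl fun s hs => by
        simp only [mem_range] at hs; congr 1; omega
    · rw [Finset.sum_Ico_eq_sum_range]
      have h2 : 2 * n + 1 - (n + 1) = n := by omega
      rw [h2]
      rw [show (∑ s ∈ range n, (s + 1) ^ 2)
          = ∑ s ∈ range n, (n - 1 - s + 1) ^ 2 from (Finset.sum_range_reflect _ _).symm]
      refine Finset.sum_congr rfl fun s hs => ?_
      simp only [mem_range] at hs
      congr 1
      omega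
  rw [hsplit]
  have h3 := sum_sq_formula (n + 1)
  have h4 := sum_sq_formula n
  nlinarith [h3, h4]

theorem energy_interval (n : ℕ) :
    ((((range (n + 1) ×ˢ range (n + 1)) ×ˢ (range (n + 1) ×ˢ range (n + 1))).filter
        (fun p => p.1.1 + p.1.2 = p.2.1 + p.2.2)).card : ℚ)
      = (2 * (n + 1) ^ 3 + (n + 1)) / 3 := by
  have h := energy_nat n
  have h' := congrArg (Nat.cast : ℕ → ℚ) h
  push_cast at h'
  field_simp
  linarith
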